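/- Let K ⊆ ℝ^d have diameter at most D, let f : ℝ^d → ℝ be L-smooth, let w_1,…,w_T ∈ K with anytime averages x_t = (Σ_{i=1}^t i·w_i)/(t(t+1)/2) for weights α_t = t, let τ_1,…,τ_T be integers with 0 ≤ τ_t ≤ t − 1, and let ξ_1,…,ξ_T ∈ ℝ^d be arbitrary vectors. Then for every t with 2 ≤ t ≤ T, ‖(∇f(x_{t−1−τ_{t−1}}) + ξ_{t−1}) − (∇f(x_{t−τ_t}) + ξ_t)‖ ≤ 2·L·D/(t−1) + 8·L·D·τ_{t−1}/(t−1) + 8·L·D·τ_t/t + ‖ξ_t‖ + ‖ξ_{t−1}‖. -/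

import Mathlib

open Finset

lemma sum_Icc_cast (s : ℕ) : ∑ i ∈ Icc 1 s, (i : ℝ) = (s : ℝ) * ((s : ℝ) + 1) / 2 := by
  induction s with
  | zero => simp
  | succ n ih =>
    rw [Finset.sum_Icc_succ_top (by omega), ih]
    push_cast; ring

section aux
variable {V : Type*} [NormedAddCommGroup V] [NormedSpace ℝ V]

lemma close_to_avg (D : ℝ) (K : Set V)
    (hD : ∀ u ∈ K, ∀ v ∈ K, ‖u - v‖ ≤ D) (w : ℕ → V) {s : ℕ}
    (hw : ∀ i ∈ Icc 1 s, w i ∈ K) (hs : 1 ≤ s) {u : V} (hu : u ∈ K) :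
    ‖u - ((s * (s + 1) : ℝ) / 2)⁻¹ • ∑ i ∈ Icc 1 s, (i : ℝ) • w i‖ ≤ D := by
  have hs1 : (1:ℝ) ≤ (s:ℝ) := by exact_mod_cast hs
  set A : ℝ := (s * (s+1) : ℝ) / 2 with hA
  have hApos : 0 < A := by rw [hA]; nlinarith
  have hsum : ∑ i ∈ Icc 1 s, (i:ℝ) = A := sum_Icc_cast s
  have key : u - A⁻¹ • ∑ i ∈ Icc 1 s, (i:ℝ) • w i
      = A⁻¹ • ∑ i ∈ Icc 1 s, (i:ℝ) • (u - w i) := by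
    have h1 : ∑ i ∈ Icc 1 s, (i:ℝ) • (u - w i)
        = A • u - ∑ i ∈ Icc 1 s, (i:ℝ) • w i := by
      simp only [smul_sub, Finset.sum_sub_distrib, ← Finset.sum_smul, hsum]
    rw [h1, smul_sub, smul_smul, inv_mul_cancel₀ hApos.ne', one_smul]
  rw [key]
  have h2 : ‖∑ i ∈ Icc 1 s, (i:ℝ) • (u - w i)‖ ≤ ∑ i ∈ Icc 1 s, (i:ℝ) * D := by
    refine (norm_sum_le _ _).trans (Finset.sum_le_sum ?_)
    intro i hi
    rw [norm_smul, Real.norm_natCast]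
    exact mul_le_mul_of_nonneg_left (hD u hu (w i) (hw i hi)) (Nat.cast_nonneg i)
  calc ‖A⁻¹ • ∑ i ∈ Icc 1 s, (i:ℝ) • (u - w i)‖
      = A⁻¹ * ‖∑ i ∈ Icc 1 s, (i:ℝ) • (u - w i)‖ := by
        rw [norm_smul, Real.norm_eq_abs, abs_of_pos (inv_pos.2 hApos)]
    _ ≤ A⁻¹ * ∑ i ∈ Icc 1 s, (i:ℝ) * D :=
        mul_le_mul_of_nonneg_left h2 (inv_nonneg.2 hApos.le)
    _ = D := by rw [← Finset.sum_mul, hsum]; field_simp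

lemma avg_diff (D : ℝ) (hD0 : 0 ≤ D) (K : Set V)
    (hD : ∀ u ∈ K, ∀ v ∈ K, ‖u - v‖ ≤ D) (w : ℕ → V) {s t : ℕ}
    (hw : ∀ i ∈ Icc 1 t, w i ∈ K) (hs : 1 ≤ s) (hst : s ≤ t) :
    ‖((t * (t + 1) : ℝ) / 2)⁻¹ • ∑ i ∈ Icc 1 t, (i : ℝ) • w i
      - ((s * (s + 1) : ℝ) / 2)⁻¹ • ∑ i ∈ Icc 1 s, (i : ℝ) • w i‖
      ≤ 2 * D * ((t : ℝ) - (s : ℝ)) / t := by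
  have hs1 : (1:ℝ) ≤ (s:ℝ) := by exact_mod_cast hs
  have hstR : (s:ℝ) ≤ (t:ℝ) := by exact_mod_cast hst
  have ht1 : (1:ℝ) ≤ (t:ℝ) := le_trans hs1 hstR
  have htpos : (0:ℝ) < t := by linarith
  set At : ℝ := (t * (t+1) : ℝ) / 2 with hAt
  set As : ℝ := (s * (s+1) : ℝ) / 2 with hAs
  have hAtpos : 0 < At := by rw [hAt]; nlinarith
  have hAspos : 0 < As := by rw [hAs]; nlinarith
  have hIcc : ∀ n : ℕ, Icc 1 n = Ioc 0 n := fun n => Finset.Icc_add_one_left_eq_Ioc 0 n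
  have hsplit : ∑ i ∈ Icc 1 t, (i:ℝ) • w i
      = (∑ i ∈ Icc 1 s, (i:ℝ) • w i) + ∑ i ∈ Ioc s t, (i:ℝ) • w i := by
    rw [hIcc t, hIcc s, Finset.sum_Ioc_consecutive _ (Nat.zero_le s) hst]
  have hsumIoc : ∑ i ∈ Ioc s t, (i:ℝ) = At - As := by
    have h := Finset.sum_Ioc_consecutive (fun i : ℕ => (i:ℝ)) (Nat.zero_le s) hst
    have h1 : ∑ i ∈ Ioc 0 s, (i:ℝ) = As := by rw [← hIcc s]; exact sum_Icc_cast s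
    have h2 : ∑ i ∈ Ioc 0 t, (i:ℝ) = At := by rw [← hIcc t]; exact sum_Icc_cast t
    rw [h1, h2] at h; linarith
  set xs : V := (As)⁻¹ • ∑ i ∈ Icc 1 s, (i : ℝ) • w i with hxs
  have key : (At)⁻¹ • ∑ i ∈ Icc 1 t, (i : ℝ) • w i - xs
      = (At)⁻¹ • ∑ i ∈ Ioc s t, (i:ℝ) • (w i - xs) := by
    have hrhs : ∑ i ∈ Ioc s t, (i:ℝ) • (w i - xs)
        = (∑ i ∈ Ioc s t, (i:ℝ) • w i) - (At - As) • xs := by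
      simp only [smul_sub, Finset.sum_sub_distrib, ← Finset.sum_smul, hsumIoc]
    rw [hsplit, hrhs, hxs]
    match_scalars <;> field_simp <;> ring
  rw [key]
  have hb : ∀ i ∈ Ioc s t, ‖(i:ℝ) • (w i - xs)‖ ≤ (i:ℝ) * D := by
    intro i hi
    rw [norm_smul, Real.norm_natCast]
    refine mul_le_mul_of_nonneg_left ?_ (Nat.cast_nonneg i)
    have hiK : w i ∈ K := hw i (by simp at hi ⊢; omega)
    exact close_to_avg D K hD w (fun j hj => hw j (by simp at hj ⊢; omega)) hs hiK
  have h2 : ‖∑ i ∈ Ioc s t, (i:ℝ) • (w i - xs)‖ ≤ (At - As) * D := by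
    refine (norm_sum_le _ _).trans ?_
    calc ∑ i ∈ Ioc s t, ‖(i:ℝ) • (w i - xs)‖ ≤ ∑ i ∈ Ioc s t, (i:ℝ) * D :=
          Finset.sum_le_sum hb
      _ = (At - As) * D := by rw [← Finset.sum_mul, hsumIoc]
  calc ‖(At)⁻¹ • ∑ i ∈ Ioc s t, (i:ℝ) • (w i - xs)‖
      = (At)⁻¹ * ‖∑ i ∈ Ioc s t, (i:ℝ) • (w i - xs)‖ := by
        rw [norm_smul, Real.norm_eq_abs, abs_of_pos (inv_pos.2 hAtpos)]
    _ ≤ (At)⁻¹ * ((At - As) * D) := mul_le_mul_of_nonneg_left h2 (inv_nonneg.2 hAtpos.le)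
    _ ≤ 2 * D * ((t : ℝ) - (s : ℝ)) / t := by
        have heq : (At)⁻¹ * ((At - As)*D) = ((At - As)*D)/At := by ring
        rw [heq, div_le_div_iff₀ hAtpos htpos, hAt, hAs]
        nlinarith [mul_nonneg (mul_nonneg (mul_nonneg hD0 htpos.le)
          (sub_nonneg.2 hstR)) (show (0:ℝ) ≤ (t:ℝ)+1-(s:ℝ) by linarith)]
end aux

/-- Bound on the distance between the optimistic hint
`M_{t-τ_t} = ∇f(x_{t-1-τ_{t-1}}) + ξ_{t-1}` and the delayed stochastic gradient
`g_{t-τ_t} = ∇f(x_{t-τ_t}) + ξ_t`, for the anytime averages `x_t` with weights `α_t = t`. -/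
theorem stmt_9 {d T : ℕ} (K : Set (EuclideanSpace ℝ (Fin d))) (D L : ℝ) (hL0 : 0 ≤ L)
    (hD : ∀ u ∈ K, ∀ v ∈ K, ‖u - v‖ ≤ D)
    (f : EuclideanSpace ℝ (Fin d) → ℝ) (hdiff : Differentiable ℝ f)
    (hL : ∀ x y : EuclideanSpace ℝ (Fin d), ‖gradient f x - gradient f y‖ ≤ L * ‖x - y‖)
    (w x : ℕ → EuclideanSpace ℝ (Fin d))
    (hw : ∀ t ∈ Icc 1 T, w t ∈ K)
    (hx : ∀ t ∈ Icc 1 T, x t = ((t * (t + 1) : ℝ) / 2)⁻¹ • ∑ i ∈ Icc 1 t, (i : ℝ) • w i)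
    (τ : ℕ → ℕ) (hτ : ∀ t ∈ Icc 1 T, τ t ≤ t - 1)
    (ξ : ℕ → EuclideanSpace ℝ (Fin d)) :
    ∀ t : ℕ, 2 ≤ t → t ≤ T →
      ‖(gradient f (x (t - 1 - τ (t - 1))) + ξ (t - 1)) - (gradient f (x (t - τ t)) + ξ t)‖ ≤
        2 * L * D / ((t : ℝ) - 1) + 8 * L * D * τ (t - 1) / ((t : ℝ) - 1)
          + 8 * L * D * τ t / t + ‖ξ t‖ + ‖ξ (t - 1)‖ := by
  intro t ht2 htT
  have hD0 : 0 ≤ D := by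
    have h1 : w 1 ∈ K := hw 1 (by simp; omega)
    have := hD (w 1) h1 (w 1) h1
    simpa using this
  set p := t - 1 with hp
  set a := p - τ p with ha
  set b := t - τ t with hb
  have htmem : t ∈ Icc 1 T := by simp; omega
  have hpmem : p ∈ Icc 1 T := by simp; omega
  have hτt : τ t ≤ t - 1 := hτ t htmem
  have hτp : τ p ≤ p - 1 := hτ p hpmem
  have ha1 : 1 ≤ a := by omega
  have hb1 : 1 ≤ b := by omega
  have hamem : a ∈ Icc 1 T := by simp; omega
  have hbmem : b ∈ Icc 1 T := by simp; omega
  have hwp : ∀ i ∈ Icc 1 p, w i ∈ K := fun i hi => hw i (by simp at hi ⊢; omega)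
  have hwt : ∀ i ∈ Icc 1 t, w i ∈ K := fun i hi => hw i (by simp at hi ⊢; omega)
  have h1 : ‖x p - x a‖ ≤ 2 * D * ((p : ℝ) - (a : ℝ)) / p := by
    rw [hx p hpmem, hx a hamem]
    exact avg_diff D hD0 K hD w hwp ha1 (by omega)
  have h2 : ‖x t - x p‖ ≤ 2 * D * ((t : ℝ) - (p : ℝ)) / t := by
    rw [hx t htmem, hx p hpmem]
    exact avg_diff D hD0 K hD w hwt (by omega) (by omega)
  have h3 : ‖x t - x b‖ ≤ 2 * D * ((t : ℝ) - (b : ℝ)) / t := by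
    rw [hx t htmem, hx b hbmem]
    exact avg_diff D hD0 K hD w hwt hb1 (by omega)
  have htri : ‖x a - x b‖ ≤ ‖x p - x a‖ + ‖x t - x p‖ + ‖x t - x b‖ := by
    have he : x a - x b = -(x p - x a) + -(x t - x p) + (x t - x b) := by abel
    rw [he]
    refine norm_add₃_le.trans ?_
    rw [norm_neg, norm_neg]
  have hgrad : ‖gradient f (x a) - gradient f (x b)‖ ≤ L * ‖x a - x b‖ := hL _ _
  have hmain : ‖(gradient f (x a) + ξ p) - (gradient f (x b) + ξ t)‖
      ≤ L * (‖x p - x a‖ + ‖x t - x p‖ + ‖x t - x b‖) + ‖ξ t‖ + ‖ξ p‖ := by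
    have he : (gradient f (x a) + ξ p) - (gradient f (x b) + ξ t)
        = (gradient f (x a) - gradient f (x b)) + (ξ p - ξ t) := by abel
    rw [he]
    refine (norm_add_le _ _).trans ?_
    have := (norm_sub_le (ξ p) (ξ t))
    have hg2 : L * ‖x a - x b‖ ≤ L * (‖x p - x a‖ + ‖x t - x p‖ + ‖x t - x b‖) :=
      mul_le_mul_of_nonneg_left htri hL0
    linarith [hgrad]
  -- cast facts
  have hpR : (p : ℝ) = (t : ℝ) - 1 := by
    rw [hp]; push_cast [Nat.cast_sub (by omega : 1 ≤ t)]; ring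
  have haR : (p : ℝ) - (a : ℝ) = (τ p : ℝ) := by
    rw [ha]; push_cast [Nat.cast_sub (by omega : τ p ≤ p)]; ring
  have hbR : (t : ℝ) - (b : ℝ) = (τ t : ℝ) := by
    rw [hb]; push_cast [Nat.cast_sub (by omega : τ t ≤ t)]; ring
  have htpR : (t : ℝ) - (p : ℝ) = 1 := by rw [hpR]; ring
  rw [haR, hpR] at h1
  rw [htpR] at h2
  rw [hbR] at h3
  -- final numeric combination
  have ht1 : (1:ℝ) < (t:ℝ) := by exact_mod_cast (by omega : 1 < t)
  have ht0 : (0:ℝ) < (t:ℝ) - 1 := by linarith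
  have htp : (0:ℝ) < (t:ℝ) := by linarith
  have hLD : 0 ≤ L * D := mul_nonneg hL0 hD0
  have hnorms : ‖x p - x a‖ + ‖x t - x p‖ + ‖x t - x b‖
      ≤ 2 * D * (τ p : ℝ) / ((t:ℝ) - 1) + 2 * D * 1 / (t:ℝ) + 2 * D * (τ t : ℝ) / (t:ℝ) := by
    linarith
  have hinv : ((t:ℝ))⁻¹ ≤ ((t:ℝ) - 1)⁻¹ := by
    apply inv_anti₀ ht0; linarith
  have hstep : L * (2 * D * (τ p : ℝ) / ((t:ℝ) - 1) + 2 * D * 1 / (t:ℝ) + 2 * D * (τ t : ℝ) / (t:ℝ))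
      ≤ 2 * L * D / ((t : ℝ) - 1) + 8 * L * D * τ p / ((t : ℝ) - 1) + 8 * L * D * τ t / t := by
    simp only [div_eq_mul_inv, mul_one]
    nlinarith [mul_nonneg (mul_nonneg hLD (Nat.cast_nonneg (τ p) : (0:ℝ) ≤ (τ p : ℝ)))
        (inv_nonneg.2 ht0.le),
      mul_nonneg (mul_nonneg hLD (Nat.cast_nonneg (τ t) : (0:ℝ) ≤ (τ t : ℝ)))
        (inv_nonneg.2 htp.le),
      mul_nonneg hLD (sub_nonneg.2 hinv)]
  have hmul : L * (‖x p - x a‖ + ‖x t - x p‖ + ‖x t - x b‖)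
      ≤ L * (2 * D * (τ p : ℝ) / ((t:ℝ) - 1) + 2 * D * 1 / (t:ℝ) + 2 * D * (τ t : ℝ) / (t:ℝ)) :=
    mul_le_mul_of_nonneg_left hnorms hL0
  linarith [hmain]
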